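/- Let ρ, σ be positive definite n×n complex matrices and M a Hermitian matrix. Then the real function t ↦ tr((ρ+tM)·log(ρ+tM)) − tr((ρ+tM)·log σ), defined for t in a neighborhood of 0 on which ρ+tM is positive definite, is differentiable at t = 0 with derivative tr((log ρ − log σ + I)·M), where I is the identity matrix. -/

import Mathlib

open Matrix
open scoped ComplexOrder

/-- The matrix logarithm of a Hermitian matrix, via the continuous functional calculus
(`log A = Σⱼ log(λⱼ) Πⱼ` in terms of the spectral decomposition `A = Σⱼ λⱼ Πⱼ`). -/
noncomputable def matLog {n : Type*} [Fintype n] [DecidableEq n]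
    (A : Matrix n n ℂ) : Matrix n n ℂ :=
  cfc Real.log A

namespace RelEntAux

section Herm
variable {n : Type*} [Fintype n] [DecidableEq n]
variable {X : Matrix n n ℂ} (hX : X.IsHermitian)
variable {n : Type*} [Fintype n] [DecidableEq n]
variable {X : Matrix n n ℂ} (hX : X.IsHermitian)

lemma U_mul_star : (hX.eigenvectorUnitary : Matrix n n ℂ) *
    star (hX.eigenvectorUnitary : Matrix n n ℂ) = 1 :=
  (Matrix.mem_unitaryGroup_iff).mp hX.eigenvectorUnitary.2

lemma star_mul_U : star (hX.eigenvectorUnitary : Matrix n n ℂ) *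
    (hX.eigenvectorUnitary : Matrix n n ℂ) = 1 :=
  (Matrix.mem_unitaryGroup_iff').mp hX.eigenvectorUnitary.2

lemma cfc_add' (f g : ℝ → ℝ) :
    hX.cfc (fun x => f x + g x) = hX.cfc f + hX.cfc g := by
  simp only [Matrix.IsHermitian.cfc, Unitary.conjStarAlgAut_apply, Unitary.coe_star]
  have hd : (diagonal (RCLike.ofReal ∘ (fun x => f x + g x) ∘ hX.eigenvalues) : Matrix n n ℂ)
      = diagonal (RCLike.ofReal ∘ f ∘ hX.eigenvalues)
        + diagonal (RCLike.ofReal ∘ g ∘ hX.eigenvalues) := by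
    ext i j
    by_cases h : i = j <;> simp [Matrix.diagonal_apply, h]
  rw [hd, mul_add, add_mul]

lemma cfc_sub' (f g : ℝ → ℝ) :
    hX.cfc (fun x => f x - g x) = hX.cfc f - hX.cfc g := by
  simp only [Matrix.IsHermitian.cfc, Unitary.conjStarAlgAut_apply, Unitary.coe_star]
  have hd : (diagonal (RCLike.ofReal ∘ (fun x => f x - g x) ∘ hX.eigenvalues) : Matrix n n ℂ)
      = diagonal (RCLike.ofReal ∘ f ∘ hX.eigenvalues)
        - diagonal (RCLike.ofReal ∘ g ∘ hX.eigenvalues) := by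
    ext i j
    by_cases h : i = j <;> simp [Matrix.diagonal_apply, h]
  rw [hd, mul_sub, sub_mul]

lemma cfc_mul' (f g : ℝ → ℝ) :
    hX.cfc (fun x => f x * g x) = hX.cfc f * hX.cfc g := by
  simp only [Matrix.IsHermitian.cfc, Unitary.conjStarAlgAut_apply, Unitary.coe_star]
  have h1 : star (hX.eigenvectorUnitary : Matrix n n ℂ) *
      (hX.eigenvectorUnitary : Matrix n n ℂ) = 1 := star_mul_U hX
  have key : ∀ a b c d e f : Matrix n n ℂ, (a * b * c) * (d * e * f) = a * (b * (c * d) * e) * f := by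
    intros; simp only [mul_assoc]
  rw [key, h1, mul_one, diagonal_mul_diagonal]
  congr 2
  ext i j
  by_cases h : i = j <;> simp [Matrix.diagonal_apply, h]

lemma cfc_id' : hX.cfc (fun x => x) = X := by
  conv_rhs => rw [hX.spectral_theorem]
  rfl

lemma cfc_one' : hX.cfc (fun _ => 1) = 1 := by
  simp only [Matrix.IsHermitian.cfc, Unitary.conjStarAlgAut_apply, Unitary.coe_star]
  have : (diagonal (RCLike.ofReal ∘ (fun _ : ℝ => (1:ℝ)) ∘ hX.eigenvalues) : Matrix n n ℂ) = 1 := by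
    ext i j
    simp [Matrix.diagonal_apply, Matrix.one_apply]
  rw [this, mul_one, U_mul_star hX]

lemma cfc_const' (c : ℝ) : hX.cfc (fun _ => c) = (c : ℂ) • 1 := by
  simp only [Matrix.IsHermitian.cfc, Unitary.conjStarAlgAut_apply, Unitary.coe_star]
  have : (diagonal (RCLike.ofReal ∘ (fun _ : ℝ => c) ∘ hX.eigenvalues) : Matrix n n ℂ)
      = (c : ℂ) • 1 := by
    ext i j
    by_cases h : i = j <;> simp [Matrix.diagonal_apply, Matrix.one_apply, h]
  rw [this]
  rw [mul_smul_comm, smul_mul_assoc, mul_one, U_mul_star hX]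

lemma cfc_smul' (c : ℝ) (f : ℝ → ℝ) :
    hX.cfc (fun x => c * f x) = (c : ℂ) • hX.cfc f := by
  have := cfc_mul' hX (fun _ => c) f
  rw [this, cfc_const' hX, smul_mul_assoc, one_mul]

lemma cfc_aeval (p : Polynomial ℝ) :
    hX.cfc (fun x => Polynomial.eval x p) = Polynomial.aeval X p := by
  induction p using Polynomial.induction_on with
  | C a =>
      simp only [Polynomial.eval_C, Polynomial.aeval_C]
      rw [cfc_const' hX, Algebra.algebraMap_eq_smul_one]
      ext i j
      simp [Algebra.smul_def]
  | add p q hp hq =>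
      simp only [Polynomial.eval_add]
      rw [cfc_add' hX _ _, hp, hq, map_add]
  | monomial k a h =>
      have : (fun x : ℝ => Polynomial.eval x (Polynomial.C a * Polynomial.X ^ (k + 1)))
          = fun x => (Polynomial.eval x (Polynomial.C a * Polynomial.X ^ k)) * x := by
        funext x
        simp [pow_succ, mul_assoc]
      rw [this, cfc_mul' hX _ _, h, cfc_id' hX]
      simp [pow_succ, mul_assoc]
lemma quadForm_conj_diagonal (U : Matrix n n ℂ) (d : n → ℝ) (v : n → ℂ) :
    star v ⬝ᵥ ((U * diagonal (fun i => (d i : ℂ)) * star U) *ᵥ v)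
      = ∑ j, ((d j * Complex.normSq ((star U *ᵥ v) j) : ℝ) : ℂ) := by
  have hUU : (star U)ᴴ = U := by
    rw [star_eq_conjTranspose, conjTranspose_conjTranspose]
  rw [← mulVec_mulVec, ← mulVec_mulVec, dotProduct_mulVec]
  have hsv : star v ᵥ* U = star (star U *ᵥ v) := by
    rw [star_mulVec, hUU]
  rw [hsv]
  set w := star U *ᵥ v with hw
  have hdm : diagonal (fun i => (d i : ℂ)) *ᵥ w = fun j => (d j : ℂ) * w j := by
    ext j
    simp [Matrix.mulVec, dotProduct, Matrix.diagonal_apply, Finset.sum_ite_eq,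
      Finset.mem_univ]
  rw [hdm]
  simp only [dotProduct, Pi.star_apply]
  apply Finset.sum_congr rfl
  intro j _
  push_cast
  rw [Complex.star_def, Complex.normSq_eq_conj_mul_self]
  ring

lemma sum_normSq_starU_mulVec (v : n → ℂ) :
    ∑ j, Complex.normSq ((star (hX.eigenvectorUnitary : Matrix n n ℂ) *ᵥ v) j)
      = ∑ j, Complex.normSq (v j) := by
  set U : Matrix n n ℂ := (hX.eigenvectorUnitary : Matrix n n ℂ) with hU
  have hUU : (star U)ᴴ = U := by
    rw [star_eq_conjTranspose, conjTranspose_conjTranspose]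
  have h1 : ∀ w : n → ℂ, ((∑ j, (Complex.normSq (w j) : ℂ)) : ℂ) = star w ⬝ᵥ w := by
    intro w
    simp only [dotProduct, Pi.star_apply, Complex.star_def]
    exact Finset.sum_congr rfl fun j _ => Complex.normSq_eq_conj_mul_self
  have key : ((∑ j, Complex.normSq ((star U *ᵥ v) j) : ℝ) : ℂ)
      = ((∑ j, Complex.normSq (v j) : ℝ) : ℂ) := by
    push_cast
    rw [h1, h1]
    rw [star_mulVec, hUU, ← dotProduct_mulVec, mulVec_mulVec, U_mul_star hX, one_mulVec]
  exact_mod_cast key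

lemma sum_normSq_eigenvectorBasis (i : n) :
    ∑ j, Complex.normSq (⇑(hX.eigenvectorBasis i) j) = 1 := by
  have h : ‖hX.eigenvectorBasis i‖ = 1 := hX.eigenvectorBasis.orthonormal.1 i
  rw [EuclideanSpace.norm_eq] at h
  have h2 : ∑ j, ‖(hX.eigenvectorBasis i) j‖ ^ 2 = 1 := by
    have hnn : 0 ≤ ∑ j, ‖(hX.eigenvectorBasis i) j‖ ^ 2 :=
      Finset.sum_nonneg fun j _ => sq_nonneg _
    nlinarith [Real.sq_sqrt hnn, h]
  rw [← h2]
  exact Finset.sum_congr rfl fun j _ => by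
    rw [Complex.normSq_eq_norm_sq]

lemma conj_diag_eq_quadForm (B : Matrix n n ℂ) (i : n) :
    (star (hX.eigenvectorUnitary : Matrix n n ℂ) * B *
        (hX.eigenvectorUnitary : Matrix n n ℂ)) i i
      = star (⇑(hX.eigenvectorBasis i)) ⬝ᵥ (B *ᵥ ⇑(hX.eigenvectorBasis i)) := by
  simp only [Matrix.mul_apply, dotProduct, Matrix.mulVec, Matrix.star_apply,
    Matrix.conjTranspose_apply, Pi.star_apply, Matrix.IsHermitian.eigenvectorUnitary_apply]
  simp only [Finset.sum_mul, Finset.mul_sum]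
  rw [Finset.sum_comm]
  exact Finset.sum_congr rfl fun x _ => Finset.sum_congr rfl fun y _ => by ring

end Herm

section Two
variable {n : Type*} [Fintype n] [DecidableEq n]

/-- transition matrix between two eigenbases -/
noncomputable def Wmat {A B : Matrix n n ℂ} (hA : A.IsHermitian) (hB : B.IsHermitian) :
    Matrix n n ℂ :=
  star (hB.eigenvectorUnitary : Matrix n n ℂ) * (hA.eigenvectorUnitary : Matrix n n ℂ)

variable {A B : Matrix n n ℂ} (hA : A.IsHermitian) (hB : B.IsHermitian)

lemma Wmat_mul_star : Wmat hA hB * star (Wmat hA hB) = 1 := by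
  rw [Wmat, Matrix.star_mul, star_star, mul_assoc, ← mul_assoc (hA.eigenvectorUnitary : Matrix n n ℂ),
    U_mul_star hA, one_mul, star_mul_U hB]

lemma star_mul_Wmat : star (Wmat hA hB) * Wmat hA hB = 1 := by
  rw [Wmat, Matrix.star_mul, star_star, mul_assoc, ← mul_assoc (hB.eigenvectorUnitary : Matrix n n ℂ),
    U_mul_star hB, one_mul, star_mul_U hA]

lemma Wmat_row_sum (j : n) : ∑ i, Complex.normSq (Wmat hA hB j i) = 1 := by
  have h : (Wmat hA hB * star (Wmat hA hB)) j j = 1 := by rw [Wmat_mul_star]; simp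
  rw [Matrix.mul_apply] at h
  have h2 : ∀ i, Wmat hA hB j i * star (Wmat hA hB) i j
      = ((Complex.normSq (Wmat hA hB j i) : ℝ) : ℂ) := by
    intro i
    rw [star_eq_conjTranspose, Matrix.conjTranspose_apply, Complex.star_def, Complex.mul_conj]
  rw [Finset.sum_congr rfl fun i _ => h2 i] at h
  exact_mod_cast h

lemma Wmat_col_sum (i : n) : ∑ j, Complex.normSq (Wmat hA hB j i) = 1 := by
  have h : (star (Wmat hA hB) * Wmat hA hB) i i = 1 := by rw [star_mul_Wmat]; simp
  rw [Matrix.mul_apply] at h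
  have h2 : ∀ j, star (Wmat hA hB) i j * Wmat hA hB j i
      = ((Complex.normSq (Wmat hA hB j i) : ℝ) : ℂ) := by
    intro j
    rw [star_eq_conjTranspose, Matrix.conjTranspose_apply, mul_comm, Complex.star_def,
      Complex.mul_conj]
  rw [Finset.sum_congr rfl fun j _ => h2 j] at h
  exact_mod_cast h

lemma trace_diagonal_mul (d : n → ℂ) (C : Matrix n n ℂ) :
    (diagonal d * C).trace = ∑ i, d i * C i i := by
  simp [Matrix.trace, Matrix.diagonal_mul, Matrix.diag]

lemma trace_cfc_mul {X : Matrix n n ℂ} (hX : X.IsHermitian) (f : ℝ → ℝ) (B : Matrix n n ℂ) :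
    (hX.cfc f * B).trace = ∑ i, (f (hX.eigenvalues i) : ℂ) *
      ((star (hX.eigenvectorUnitary : Matrix n n ℂ) * B *
        (hX.eigenvectorUnitary : Matrix n n ℂ)) i i) := by
  set U : Matrix n n ℂ := (hX.eigenvectorUnitary : Matrix n n ℂ) with hU
  have : hX.cfc f * B = U * (diagonal (RCLike.ofReal ∘ f ∘ hX.eigenvalues) * (star U * B)) := by
    simp only [Matrix.IsHermitian.cfc, Unitary.conjStarAlgAut_apply, Unitary.coe_star, mul_assoc]
    rfl
  rw [this, Matrix.trace_mul_comm, mul_assoc, trace_diagonal_mul]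
  congr 1

lemma trace_cfc {X : Matrix n n ℂ} (hX : X.IsHermitian) (f : ℝ → ℝ) :
    (hX.cfc f).trace = ∑ i, ((f (hX.eigenvalues i) : ℝ) : ℂ) := by
  have h := trace_cfc_mul hX f 1
  rw [mul_one] at h
  rw [h]
  apply Finset.sum_congr rfl
  intro i _
  rw [mul_one, star_mul_U hX]
  simp

/-- diagonal entries of conjugation of a diagonal matrix -/
lemma conj_diag_entry (W : Matrix n n ℂ) (d : n → ℝ) (j : n) :
    (W * diagonal (fun i => ((d i : ℝ) : ℂ)) * star W) j j
      = ∑ i, ((d i * Complex.normSq (W j i) : ℝ) : ℂ) := by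
  rw [Matrix.mul_apply]
  apply Finset.sum_congr rfl
  intro i _
  rw [Matrix.mul_diagonal, star_eq_conjTranspose, Matrix.conjTranspose_apply]
  push_cast
  rw [mul_comm (W j i) _, mul_assoc, Complex.star_def, Complex.mul_conj]

/-- the key double-sum formula for the trace of a product of two functional calculi -/
lemma trace_cfc_mul_cfc (f g : ℝ → ℝ) :
    (hB.cfc g * hA.cfc f).trace = ∑ j, ∑ i, ((g (hB.eigenvalues j) * (f (hA.eigenvalues i) *
        Complex.normSq (Wmat hA hB j i)) : ℝ) : ℂ) := by
  rw [trace_cfc_mul hB g (hA.cfc f)]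
  have key : star (hB.eigenvectorUnitary : Matrix n n ℂ) * hA.cfc f *
        (hB.eigenvectorUnitary : Matrix n n ℂ)
      = Wmat hA hB * diagonal (fun i => ((f (hA.eigenvalues i) : ℝ) : ℂ)) * star (Wmat hA hB) := by
    simp only [Matrix.IsHermitian.cfc, Unitary.conjStarAlgAut_apply, Unitary.coe_star, Wmat, Matrix.star_mul, star_star, mul_assoc]
    rfl
  rw [key]
  apply Finset.sum_congr rfl
  intro j _
  rw [conj_diag_entry]
  rw [Finset.mul_sum]
  apply Finset.sum_congr rfl
  intro i _
  push_cast
  ring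

lemma klein_scalar {a b : ℝ} (ha : 0 < a) (hb : 0 < b) :
    (Real.log b + 1) * (a - b) ≤ a * Real.log a - b * Real.log b := by
  have h := Real.log_le_sub_one_of_pos (div_pos hb ha)
  rw [Real.log_div hb.ne' ha.ne'] at h
  have h2 : a * (Real.log b - Real.log a) ≤ a * (b / a - 1) :=
    mul_le_mul_of_nonneg_left h ha.le
  have h3 : a * (b / a) = b := by field_simp
  nlinarith [h2, h3]

theorem klein_ineq (hA : A.IsHermitian) (hB : B.IsHermitian)
    (hApos : ∀ i, 0 < hA.eigenvalues i) (hBpos : ∀ j, 0 < hB.eigenvalues j) :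
    ((hB.cfc (fun x => Real.log x + 1)) * (A - B)).trace.re
      ≤ ((hA.cfc (fun x => x * Real.log x)).trace).re
        - ((hB.cfc (fun x => x * Real.log x)).trace).re := by
  set w : n → n → ℝ := fun j i => Complex.normSq (Wmat hA hB j i) with hw
  set a : n → ℝ := hA.eigenvalues
  set b : n → ℝ := hB.eigenvalues
  set s1 : ℝ := ∑ i, a i * Real.log (a i) with hs1def
  set s2 : ℝ := ∑ j, b j * Real.log (b j) with hs2def
  set s3 : ℝ := ∑ j, ∑ i, (Real.log (b j) + 1) * (a i * w j i) with hs3def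
  set s4 : ℝ := ∑ j, (Real.log (b j) + 1) * b j with hs4def
  have hwnn : ∀ j i, 0 ≤ w j i := fun j i => Complex.normSq_nonneg _
  -- trace identities
  have e1 : (hA.cfc (fun x => x * Real.log x)).trace = ((s1 : ℝ) : ℂ) := by
    rw [trace_cfc hA]; norm_cast
  have e2 : (hB.cfc (fun x => x * Real.log x)).trace = ((s2 : ℝ) : ℂ) := by
    rw [trace_cfc hB]; norm_cast
  have e3 : ((hB.cfc (fun x => Real.log x + 1)) * A).trace = ((s3 : ℝ) : ℂ) := by
    conv_lhs => rw [← cfc_id' hA]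
    rw [trace_cfc_mul_cfc hA hB (fun x => x) (fun x => Real.log x + 1)]
    norm_cast
  have e4' : (hB.cfc (fun x => Real.log x + 1)) * B
      = hB.cfc (fun x => (Real.log x + 1) * x) := by
    rw [cfc_mul' hB (fun x => Real.log x + 1) (fun x => x), cfc_id' hB]
  have e4 : ((hB.cfc (fun x => Real.log x + 1)) * B).trace = ((s4 : ℝ) : ℂ) := by
    rw [e4', trace_cfc hB]
    norm_cast
  have etot : ((hB.cfc (fun x => Real.log x + 1)) * (A - B)).trace = ((s3 - s4 : ℝ) : ℂ) := by
    rw [mul_sub, trace_sub, e3, e4]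
    push_cast
    ring
  rw [etot, e1, e2, Complex.ofReal_re, Complex.ofReal_re, Complex.ofReal_re]
  -- now a real inequality
  have hs1 : s1 = ∑ j, ∑ i, (a i * Real.log (a i)) * w j i := by
    rw [hs1def, Finset.sum_comm]
    apply Finset.sum_congr rfl
    intro i _
    rw [← Finset.mul_sum, Wmat_col_sum hA hB i, mul_one]
  have hs2 : s2 = ∑ j, ∑ i, (b j * Real.log (b j)) * w j i := by
    apply Finset.sum_congr rfl
    intro j _
    rw [← Finset.mul_sum, Wmat_row_sum hA hB j, mul_one]
  have hs4 : s4 = ∑ j, ∑ i, ((Real.log (b j) + 1) * b j) * w j i := by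
    apply Finset.sum_congr rfl
    intro j _
    rw [← Finset.mul_sum, Wmat_row_sum hA hB j, mul_one]
  have key : (s1 - s2) - (s3 - s4)
      = ∑ j, ∑ i, (a i * Real.log (a i) - b j * Real.log (b j)
          - (Real.log (b j) + 1) * (a i - b j)) * w j i := by
    rw [hs1, hs2, hs4, hs3def]
    simp only [← Finset.sum_sub_distrib]
    apply Finset.sum_congr rfl
    intro j _
    apply Finset.sum_congr rfl
    intro i _
    ring
  have hpos : 0 ≤ (s1 - s2) - (s3 - s4) := by
    rw [key]
    apply Finset.sum_nonneg
    intro j _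
    apply Finset.sum_nonneg
    intro i _
    apply mul_nonneg _ (hwnn j i)
    have := klein_scalar (hApos i) (hBpos j)
    linarith
  linarith
end Two

section More
variable {n : Type*} [Fintype n] [DecidableEq n]

lemma matLog_eq {X : Matrix n n ℂ} (hX : X.IsHermitian) : matLog X = hX.cfc Real.log :=
  hX.cfc_eq Real.log

lemma mul_matLog {X : Matrix n n ℂ} (hX : X.IsHermitian) :
    X * matLog X = hX.cfc (fun x => x * Real.log x) := by
  rw [matLog_eq hX]
  calc X * hX.cfc Real.log = hX.cfc (fun x => x) * hX.cfc Real.log := by rw [cfc_id' hX]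
    _ = hX.cfc (fun x => x * Real.log x) := (cfc_mul' hX _ _).symm

lemma cfc_log_add_one {X : Matrix n n ℂ} (hX : X.IsHermitian) :
    hX.cfc (fun x => Real.log x + 1) = matLog X + 1 := by
  rw [cfc_add' hX, cfc_one' hX, matLog_eq hX]

/-- spectral representation of the quadratic form of a Hermitian matrix -/
lemma quadForm_eq {Y : Matrix n n ℂ} (hY : Y.IsHermitian) (v : n → ℂ) :
    star v ⬝ᵥ (Y *ᵥ v) = ∑ j, ((hY.eigenvalues j *
      Complex.normSq ((star (hY.eigenvectorUnitary : Matrix n n ℂ) *ᵥ v) j) : ℝ) : ℂ) := by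
  have hsp : Y = (hY.eigenvectorUnitary : Matrix n n ℂ) *
      diagonal (fun i => ((hY.eigenvalues i : ℝ) : ℂ)) *
      star (hY.eigenvectorUnitary : Matrix n n ℂ) := by
    conv_lhs => rw [hY.spectral_theorem]
    rfl
  conv_lhs => rw [hsp]
  exact quadForm_conj_diagonal _ _ v

/-- bounds on the Rayleigh quotient of a Hermitian matrix at a unit vector -/
lemma quadForm_re_bounds {Y : Matrix n n ℂ} (hY : Y.IsHermitian) (v : n → ℂ)
    (hv : ∑ j, Complex.normSq (v j) = 1) {lb ub : ℝ}
    (hlb : ∀ j, lb ≤ hY.eigenvalues j) (hub : ∀ j, hY.eigenvalues j ≤ ub) :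
    lb ≤ (star v ⬝ᵥ (Y *ᵥ v)).re ∧ (star v ⬝ᵥ (Y *ᵥ v)).re ≤ ub := by
  have h := quadForm_eq hY v
  set N : n → ℝ := fun j =>
    Complex.normSq ((star (hY.eigenvectorUnitary : Matrix n n ℂ) *ᵥ v) j) with hN
  have hNnn : ∀ j, 0 ≤ N j := fun j => Complex.normSq_nonneg _
  have hNsum : ∑ j, N j = 1 := by rw [hN]; rw [sum_normSq_starU_mulVec hY v, hv]
  have hre : (star v ⬝ᵥ (Y *ᵥ v)).re = ∑ j, hY.eigenvalues j * N j := by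
    rw [h]
    push_cast
    rw [Complex.re_sum]
    apply Finset.sum_congr rfl
    intro j _
    rw [← Complex.ofReal_mul, Complex.ofReal_re]
  rw [hre]
  constructor
  · have hle : ∑ j, lb * N j ≤ ∑ j, hY.eigenvalues j * N j :=
      Finset.sum_le_sum fun j _ => mul_le_mul_of_nonneg_right (hlb j) (hNnn j)
    calc lb = lb * ∑ j, N j := by rw [hNsum, mul_one]
      _ = ∑ j, lb * N j := by rw [Finset.mul_sum]
      _ ≤ _ := hle
  · have hle : ∑ j, hY.eigenvalues j * N j ≤ ∑ j, ub * N j :=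
      Finset.sum_le_sum fun j _ => mul_le_mul_of_nonneg_right (hub j) (hNnn j)
    calc ∑ j, hY.eigenvalues j * N j ≤ ∑ j, ub * N j := hle
      _ = ub * ∑ j, N j := by rw [Finset.mul_sum]
      _ = ub := by rw [hNsum, mul_one]

end More

section Perturb
variable {n : Type*} [Fintype n] [DecidableEq n]

lemma isHermitian_add_smul {ρ M : Matrix n n ℂ} (hρ : ρ.IsHermitian) (hM : M.IsHermitian)
    (t : ℝ) : (ρ + (t : ℂ) • M).IsHermitian := by
  apply hρ.add
  show ((t : ℂ) • M)ᴴ = (t : ℂ) • M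
  rw [conjTranspose_smul, hM]
  congr 1
  simp [Complex.star_def, Complex.conj_ofReal]

lemma eigenvalues_perturb {ρ M : Matrix n n ℂ} (hρ : ρ.IsHermitian) (hM : M.IsHermitian)
    {t c C K : ℝ} (hc : ∀ i, c ≤ hρ.eigenvalues i) (hC : ∀ i, hρ.eigenvalues i ≤ C)
    (hK : ∀ i, |hM.eigenvalues i| ≤ K)
    (hZ : (ρ + (t : ℂ) • M).IsHermitian) (i : n) :
    c - |t| * K ≤ hZ.eigenvalues i ∧ hZ.eigenvalues i ≤ C + |t| * K := by
  set v : n → ℂ := ⇑(hZ.eigenvectorBasis i) with hv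
  have hvu : ∑ j, Complex.normSq (v j) = 1 := sum_normSq_eigenvectorBasis hZ i
  have heig : hZ.eigenvalues i = (star v ⬝ᵥ ((ρ + (t : ℂ) • M) *ᵥ v)).re := by
    simpa using hZ.eigenvalues_eq i
  have hsplit : star v ⬝ᵥ ((ρ + (t : ℂ) • M) *ᵥ v)
      = star v ⬝ᵥ (ρ *ᵥ v) + (t : ℂ) * (star v ⬝ᵥ (M *ᵥ v)) := by
    rw [add_mulVec, dotProduct_add, smul_mulVec]
    congr 1
    rw [dotProduct_smul, smul_eq_mul]
  have hρb := quadForm_re_bounds hρ v hvu hc hC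
  have hMb := quadForm_re_bounds hM v hvu (fun j => (abs_le.mp (hK j)).1)
    (fun j => (abs_le.mp (hK j)).2)
  have hre : hZ.eigenvalues i = (star v ⬝ᵥ (ρ *ᵥ v)).re + t * (star v ⬝ᵥ (M *ᵥ v)).re := by
    rw [heig, hsplit, Complex.add_re, Complex.re_ofReal_mul]
  have habs : |t * (star v ⬝ᵥ (M *ᵥ v)).re| ≤ |t| * K := by
    rw [abs_mul]
    apply mul_le_mul_of_nonneg_left _ (abs_nonneg t)
    rw [abs_le]
    exact hMb
  rw [abs_le] at habs
  exact ⟨by linarith [hρb.1, habs.1], by linarith [hρb.2, habs.2]⟩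

lemma trace_cfc_mul_re_bound {X M : Matrix n n ℂ} (hX : X.IsHermitian) (hM : M.IsHermitian)
    (g : ℝ → ℝ) {K ε : ℝ} (hK : ∀ j, |hM.eigenvalues j| ≤ K)
    (hg : ∀ i, |g (hX.eigenvalues i)| ≤ ε) :
    |((hX.cfc g) * M).trace.re| ≤ (Fintype.card n : ℝ) * (ε * K) := by
  rw [trace_cfc_mul hX g M, Complex.re_sum]
  have hq : ∀ i, |((star (hX.eigenvectorUnitary : Matrix n n ℂ) * M *
      (hX.eigenvectorUnitary : Matrix n n ℂ)) i i).re| ≤ K := by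
    intro i
    rw [conj_diag_eq_quadForm hX M i, abs_le]
    exact quadForm_re_bounds hM (⇑(hX.eigenvectorBasis i)) (sum_normSq_eigenvectorBasis hX i)
      (fun j => (abs_le.mp (hK j)).1) (fun j => (abs_le.mp (hK j)).2)
  calc |∑ i, (((g (hX.eigenvalues i) : ℝ) : ℂ) *
        ((star (hX.eigenvectorUnitary : Matrix n n ℂ) * M *
          (hX.eigenvectorUnitary : Matrix n n ℂ)) i i)).re|
      ≤ ∑ i, |(((g (hX.eigenvalues i) : ℝ) : ℂ) *
        ((star (hX.eigenvectorUnitary : Matrix n n ℂ) * M *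
          (hX.eigenvectorUnitary : Matrix n n ℂ)) i i)).re| := Finset.abs_sum_le_sum_abs _ _
    _ ≤ ∑ _i : n, ε * K := by
        apply Finset.sum_le_sum
        intro i _
        rw [Complex.re_ofReal_mul, abs_mul]
        exact mul_le_mul (hg i) (hq i) (abs_nonneg _) ((abs_nonneg _).trans (hg i))
    _ = (Fintype.card n : ℝ) * (ε * K) := by
        rw [Finset.sum_const, nsmul_eq_mul, Finset.card_univ]

end Perturb

section Main
variable {n : Type*} [Fintype n] [DecidableEq n] [Nonempty n]
variable {ρ M : Matrix n n ℂ}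

/-- the minimum eigenvalue bound machinery packaged: eventually the spectrum of `ρ + tM`
lies in a fixed compact interval `[a, b] ⊆ (0, ∞)`. -/
lemma eventually_spectrum (hρ : ρ.PosDef) (hM : M.IsHermitian) :
    ∃ a b : ℝ, 0 < a ∧ ∀ᶠ t : ℝ in nhds 0,
      ∀ (hZ : (ρ + (t : ℂ) • M).IsHermitian) (i : n),
        a ≤ hZ.eigenvalues i ∧ hZ.eigenvalues i ≤ b := by
  classical
  set c : ℝ := Finset.univ.inf' Finset.univ_nonempty hρ.1.eigenvalues with hcdef
  set C : ℝ := Finset.univ.sup' Finset.univ_nonempty hρ.1.eigenvalues with hCdef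
  set K : ℝ := Finset.univ.sup' Finset.univ_nonempty (fun i => |hM.eigenvalues i|) with hKdef
  have hc_le : ∀ i, c ≤ hρ.1.eigenvalues i := fun i => Finset.inf'_le _ (Finset.mem_univ i)
  have hC_ge : ∀ i, hρ.1.eigenvalues i ≤ C := fun i => Finset.le_sup' _ (Finset.mem_univ i)
  have hK_ge : ∀ i, |hM.eigenvalues i| ≤ K :=
    fun i => Finset.le_sup' (fun j => |hM.eigenvalues j|) (Finset.mem_univ i)
  have hcpos : 0 < c := (Finset.lt_inf'_iff _).mpr fun i _ => hρ.eigenvalues_pos i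
  have hK0 : 0 ≤ K := le_trans (abs_nonneg _) (hK_ge (Classical.arbitrary n))
  refine ⟨c / 2, C + c / 2, by positivity, ?_⟩
  set δ : ℝ := c / (2 * (K + 1)) with hδdef
  have hδpos : 0 < δ := by positivity
  have hδK : δ * K ≤ c / 2 := by
    have h1 : δ * (K + 1) = c / 2 := by rw [hδdef]; field_simp
    nlinarith [hδpos]
  have hδev : ∀ᶠ t : ℝ in nhds 0, |t| ≤ δ := by
    filter_upwards [Metric.ball_mem_nhds (0 : ℝ) hδpos] with t ht
    rw [Metric.mem_ball, Real.dist_eq, sub_zero] at ht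
    exact ht.le
  filter_upwards [hδev] with t ht hZ i
  obtain ⟨h1, h2⟩ := eigenvalues_perturb hρ.1 hM hc_le hC_ge hK_ge hZ i
  have h3 : |t| * K ≤ c / 2 := le_trans (mul_le_mul_of_nonneg_right ht hK0) hδK
  exact ⟨by linarith, by linarith⟩

/-- continuity of `t ↦ tr(log(ρ + tM)·M)` at `t = 0`. -/
lemma tendsto_trace_matLog_mul (hρ : ρ.PosDef) (hM : M.IsHermitian) :
    Filter.Tendsto (fun t : ℝ => ((matLog (ρ + (t : ℂ) • M)) * M).trace.re) (nhds 0)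
      (nhds (((matLog ρ) * M).trace.re)) := by
  classical
  obtain ⟨a, b, hapos, hspec⟩ := eventually_spectrum hρ hM
  set K : ℝ := Finset.univ.sup' Finset.univ_nonempty (fun i => |hM.eigenvalues i|) with hKdef
  have hK_ge : ∀ i, |hM.eigenvalues i| ≤ K :=
    fun i => Finset.le_sup' (fun j => |hM.eigenvalues j|) (Finset.mem_univ i)
  have hK0 : 0 ≤ K := le_trans (abs_nonneg _) (hK_ge (Classical.arbitrary n))
  set N : ℝ := (Fintype.card n : ℝ) with hNdef
  have hN0 : 0 ≤ N := Nat.cast_nonneg _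
  set f : ℝ → ℝ := fun t => ((matLog (ρ + (t : ℂ) • M)) * M).trace.re with hfdef
  have hf0 : f 0 = ((matLog ρ) * M).trace.re := by
    rw [hfdef]
    norm_num
  rw [← hf0, Metric.tendsto_nhds]
  intro ε hε
  set ε' : ℝ := ε / (4 * (N * K + 1)) with hε'def
  have hε'pos : 0 < ε' := by
    apply div_pos hε
    nlinarith [mul_nonneg hN0 hK0]
  have hNKε' : N * (ε' * K) ≤ ε / 4 := by
    have hq : (N * K) / (4 * (N * K + 1)) ≤ 1 / 4 := by
      rw [div_le_div_iff₀ (by nlinarith [mul_nonneg hN0 hK0]) (by norm_num)]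
      nlinarith [mul_nonneg hN0 hK0]
    calc N * (ε' * K) = ε * ((N * K) / (4 * (N * K + 1))) := by rw [hε'def]; ring
      _ ≤ ε * (1 / 4) := mul_le_mul_of_nonneg_left hq hε.le
      _ = ε / 4 := by ring
  have hsub : Set.Icc a b ⊆ {(0:ℝ)}ᶜ := by
    intro x hx
    simp only [Set.mem_compl_iff, Set.mem_singleton_iff]
    intro h0
    rw [h0] at hx
    exact absurd hx.1 (not_le.mpr hapos)
  obtain ⟨p, hp⟩ := exists_polynomial_near_of_continuousOn a b Real.log
    (Real.continuousOn_log.mono hsub) ε' hε'pos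
  set F : ℝ → ℝ := fun t => ((Polynomial.aeval (ρ + (t : ℂ) • M) p) * M).trace.re with hFdef
  have hFcont : Continuous F :=
    Complex.continuous_re.comp ((((p.continuous_aeval.comp (continuous_const.add
      (Complex.continuous_ofReal.smul continuous_const)))).matrix_mul
        continuous_const).matrix_trace)
  have hFev : ∀ᶠ t : ℝ in nhds 0, dist (F t) (F 0) < ε / 2 :=
    Metric.tendsto_nhds.mp (hFcont.tendsto 0) (ε / 2) (by positivity)
  have hbound : ∀ s : ℝ, (∀ (hZ : (ρ + (s : ℂ) • M).IsHermitian) (i : n),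
      a ≤ hZ.eigenvalues i ∧ hZ.eigenvalues i ≤ b) → |f s - F s| ≤ N * (ε' * K) := by
    intro s hs
    have hZ : (ρ + (s : ℂ) • M).IsHermitian := isHermitian_add_smul hρ.1 hM s
    have hdiff : matLog (ρ + (s : ℂ) • M) - Polynomial.aeval (ρ + (s : ℂ) • M) p
        = hZ.cfc (fun x => Real.log x - Polynomial.eval x p) := by
      rw [cfc_sub' hZ, cfc_aeval hZ, matLog_eq hZ]
    have heq : f s - F s
        = ((hZ.cfc (fun x => Real.log x - Polynomial.eval x p)) * M).trace.re := by
      rw [hfdef, hFdef, ← Complex.sub_re, ← trace_sub, ← sub_mul, hdiff]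
    rw [heq]
    apply trace_cfc_mul_re_bound hZ hM _ hK_ge
    intro i
    obtain ⟨h1, h2⟩ := hs hZ i
    have h3 := hp (hZ.eigenvalues i) ⟨h1, h2⟩
    rw [abs_sub_comm] at h3
    exact h3.le
  have hzero : ∀ (hZ : (ρ + ((0:ℝ) : ℂ) • M).IsHermitian) (i : n),
      a ≤ hZ.eigenvalues i ∧ hZ.eigenvalues i ≤ b := by
    have := hspec.self_of_nhds
    exact this
  filter_upwards [hFev, hspec] with t hFt hst
  have hb1 := hbound t hst
  have hb2 := hbound 0 hzero
  rw [Real.dist_eq] at hFt ⊢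
  have tri : |f t - f 0| ≤ |f t - F t| + |F t - F 0| + |F 0 - f 0| := by
    calc |f t - f 0| ≤ |f t - F 0| + |F 0 - f 0| := abs_sub_le _ _ _
      _ ≤ (|f t - F t| + |F t - F 0|) + |F 0 - f 0| :=
          add_le_add_left (abs_sub_le _ _ _) _
  have hb2' : |F 0 - f 0| ≤ N * (ε' * K) := by rw [abs_sub_comm]; exact hb2
  calc |f t - f 0| ≤ |f t - F t| + |F t - F 0| + |F 0 - f 0| := tri
    _ < N * (ε' * K) + ε / 2 + N * (ε' * K) := by
        apply add_lt_add_of_lt_of_le _ hb2'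
        exact add_lt_add_of_le_of_lt hb1 hFt
    _ ≤ ε / 4 + ε / 2 + ε / 4 := by linarith [hNKε']
    _ = ε := by ring

end Main
end RelEntAux

open RelEntAux in
/-- For positive definite `ρ, σ` and Hermitian `M`, the function
`t ↦ tr((ρ+tM)·log(ρ+tM)) − tr((ρ+tM)·log σ)` is differentiable at `t = 0` with derivative
`tr((log ρ − log σ + 1)·M)`. -/
theorem relEntropy_first_arg_deriv
    {n : Type*} [Fintype n] [DecidableEq n] [Nonempty n]
    (ρ σ M : Matrix n n ℂ) (hρ : ρ.PosDef) (hσ : σ.PosDef) (hM : M.IsHermitian) :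
    HasDerivAt
      (fun t : ℝ =>
        (((ρ + t • M) * matLog (ρ + t • M)).trace - ((ρ + t • M) * matLog σ).trace).re)
      (((matLog ρ - matLog σ + 1) * M).trace).re 0 := by
  classical
  have hsmul : ∀ t : ℝ, t • M = (t : ℂ) • M := fun t => by
    ext i j
    simp [Complex.real_smul]
  have e0 : ρ + ((0:ℝ) : ℂ) • M = ρ := by simp
  set φ : ℝ → ℝ := fun s => ((ρ + (s : ℂ) • M) * matLog (ρ + (s : ℂ) • M)).trace.re with hφdef
  set ψ : ℝ → ℝ := fun s => ((ρ + (s : ℂ) • M) * matLog σ).trace.re with hψdef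
  have hfun : (fun t : ℝ =>
      (((ρ + t • M) * matLog (ρ + t • M)).trace - ((ρ + t • M) * matLog σ).trace).re)
      = fun t : ℝ => φ t - ψ t := by
    funext t
    simp only [hφdef, hψdef]
    rw [hsmul t, Complex.sub_re]
  rw [hfun]
  set L1 : ℝ := ((matLog ρ + 1) * M).trace.re with hL1
  set d2 : ℝ := (M * matLog σ).trace.re with hd2
  have hval : (((matLog ρ - matLog σ + 1) * M).trace).re = L1 - d2 := by
    have hsplit : (matLog ρ - matLog σ + 1) * M = (matLog ρ + 1) * M - matLog σ * M := by
      noncomm_ring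
    rw [hsplit, trace_sub, Complex.sub_re, hL1, hd2, Matrix.trace_mul_comm (matLog σ) M]
  rw [hval]
  have hψderiv : HasDerivAt ψ d2 0 := by
    have hψeq : ψ = fun t : ℝ => (ρ * matLog σ).trace.re + t * d2 := by
      funext t
      simp only [hψdef]
      rw [add_mul, trace_add, Complex.add_re, smul_mul_assoc, trace_smul, smul_eq_mul,
        Complex.re_ofReal_mul, hd2]
    rw [hψeq]
    simpa using ((hasDerivAt_id (0:ℝ)).mul_const d2).const_add ((ρ * matLog σ).trace.re)
  have hZ : ∀ t : ℝ, (ρ + (t : ℂ) • M).IsHermitian := fun t => isHermitian_add_smul hρ.1 hM t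
  have hρpos : ∀ i, 0 < hρ.1.eigenvalues i := hρ.eigenvalues_pos
  have hφ0 : (hρ.1.cfc (fun x => x * Real.log x)).trace.re = φ 0 := by
    simp only [hφdef]
    rw [e0, mul_matLog hρ.1]
  set hplus : ℝ → ℝ := fun s => ((matLog (ρ + (s : ℂ) • M) + 1) * M).trace.re with hplusdef
  have hplus_eq : ∀ s, hplus s = ((matLog (ρ + (s : ℂ) • M)) * M).trace.re + M.trace.re := by
    intro s
    simp only [hplusdef]
    rw [add_mul, one_mul, trace_add, Complex.add_re]
  have hL1eq : L1 = ((matLog ρ) * M).trace.re + M.trace.re := by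
    rw [hL1, add_mul, one_mul, trace_add, Complex.add_re]
  have htend : Filter.Tendsto hplus (nhds 0) (nhds L1) := by
    rw [hL1eq]
    refine ((tendsto_trace_matLog_mul hρ hM).add_const (M.trace.re)).congr ?_
    intro s
    rw [hplus_eq s]
  obtain ⟨a, b, hapos, hspec⟩ := eventually_spectrum hρ hM
  have hmain : HasDerivAt φ L1 0 := by
    rw [hasDerivAt_iff_isLittleO, Asymptotics.isLittleO_iff]
    intro ccc hccc
    have hev2 : ∀ᶠ t : ℝ in nhds 0, |hplus t - L1| ≤ ccc := by
      filter_upwards [Metric.tendsto_nhds.mp htend ccc hccc] with t ht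
      rw [Real.dist_eq] at ht
      exact ht.le
    filter_upwards [hspec, hev2] with t h1 h2
    simp only [sub_zero, smul_eq_mul, Real.norm_eq_abs]
    have hZt := hZ t
    have hpost : ∀ i, 0 < hZt.eigenvalues i := fun i => lt_of_lt_of_le hapos (h1 hZt i).1
    have hφt : (hZt.cfc (fun x => x * Real.log x)).trace.re = φ t := by
      simp only [hφdef]
      rw [mul_matLog hZt]
    have klein1 := klein_ineq hZt hρ.1 hpost hρpos
    have klein2 := klein_ineq hρ.1 hZt hρpos hpost
    have hlhs1 : ((hρ.1.cfc fun x => Real.log x + 1) * ((ρ + (t : ℂ) • M) - ρ)).trace.re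
        = t * L1 := by
      rw [cfc_log_add_one hρ.1, add_sub_cancel_left, mul_smul_comm, trace_smul, smul_eq_mul,
        Complex.re_ofReal_mul, hL1]
    have hlhs2 : ((hZt.cfc fun x => Real.log x + 1) * (ρ - (ρ + (t : ℂ) • M))).trace.re
        = -(t * hplus t) := by
      rw [cfc_log_add_one hZt, sub_add_cancel_left, mul_neg, trace_neg, Complex.neg_re,
        mul_smul_comm, trace_smul, smul_eq_mul, Complex.re_ofReal_mul]
    rw [hlhs1, hφt, hφ0] at klein1
    rw [hlhs2, hφt, hφ0] at klein2
    -- klein1 : t * L1 ≤ φ t - φ 0 ; klein2 : -(t * hplus t) ≤ φ 0 - φ t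
    have key1 : 0 ≤ φ t - φ 0 - t * L1 := by linarith
    have key2 : φ t - φ 0 - t * L1 ≤ t * (hplus t - L1) := by nlinarith [klein2]
    have key3 : t * (hplus t - L1) ≤ |t| * ccc := by
      calc t * (hplus t - L1) ≤ |t * (hplus t - L1)| := le_abs_self _
        _ = |t| * |hplus t - L1| := abs_mul _ _
        _ ≤ |t| * ccc := mul_le_mul_of_nonneg_left h2 (abs_nonneg t)
    rw [abs_of_nonneg key1]
    have hcomm : |t| * ccc = ccc * |t| := mul_comm _ _
    linarith
  exact hmain.sub hψderiv
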